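/- For each n ∈ ℕ, there is a 321-avoiding set P of 2n points in [0,1]² in general position such that any Manhattan network for P has total length at least n. -/

import Mathlib

/-- `MonPathIn U p q`: there is a monotone rectilinear (staircase) path from `p` to `q`
contained in `U`: a polyline of axis-parallel segments whose corner sequence is monotone
in both coordinates. -/
def MonPathIn (U : Set (ℝ × ℝ)) (p q : ℝ × ℝ) : Prop :=
  ∃ (m : ℕ) (c : Fin (m + 1) → ℝ × ℝ),
    c 0 = p ∧ c (Fin.last m) = q ∧
    (∀ i : Fin m, ((c i.castSucc).1 = (c i.succ).1 ∨ (c i.castSucc).2 = (c i.succ).2) ∧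
      segment ℝ (c i.castSucc) (c i.succ) ⊆ U) ∧
    (Monotone (fun i => (c i).1) ∨ Antitone (fun i => (c i).1)) ∧
    (Monotone (fun i => (c i).2) ∨ Antitone (fun i => (c i).2))



def mnlbX (n k : ℕ) : ℕ := if k < n then k + 1 else k + 2*n*(n-1) + 1
def mnlbY (n k : ℕ) : ℕ := if k < n then 2*k else 2*(k-n)+1

noncomputable def mnlbP (n k : ℕ) : ℝ × ℝ :=
  ((mnlbX n k : ℝ) / (2*(n:ℝ)^2), (mnlbY n k : ℝ) / (2*(n:ℝ)))

lemma mnlb_aux (n : ℕ) (hn : 1 ≤ n) : 2*n*(n-1) + 2*n = 2*n*n := by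
  have h1 : n - 1 + 1 = n := by omega
  calc 2*n*(n-1) + 2*n = 2*n*((n-1)+1) := by ring
    _ = 2*n*n := by rw [h1]

-- X values distinct, and bounded
lemma mnlbX_lt (n : ℕ) (hn : 1 ≤ n) {k l : ℕ} (hk : k < 2*n) (hl : l < 2*n) :
    (mnlbX n k < mnlbX n l ↔ ((k < n ∧ l < n ∧ k < l) ∨ (k < n ∧ n ≤ l) ∨ (n ≤ k ∧ n ≤ l ∧ k < l))) := by
  have ha := mnlb_aux n hn
  unfold mnlbX
  split_ifs with h1 h2 h2 <;> omega

lemma mnlbY_lt (n : ℕ) (hn : 1 ≤ n) {k l : ℕ} (hk : k < 2*n) (hl : l < 2*n) :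
    (mnlbY n k < mnlbY n l ↔ mnlbY n k < mnlbY n l) := Iff.rfl

lemma mnlbX_le_bound (n k : ℕ) (hk : k < 2*n) : mnlbX n k ≤ 2*n*n := by
  have hn : 1 ≤ n := by omega
  have ha := mnlb_aux n hn
  unfold mnlbX
  split_ifs with h1 <;> omega

lemma mnlbY_le_bound (n k : ℕ) (hk : k < 2*n) : mnlbY n k ≤ 2*n := by
  unfold mnlbY; split_ifs with h1 <;> omega

lemma mnlbX_inj (n : ℕ) {k l : ℕ} (hk : k < 2*n) (hl : l < 2*n) (h : mnlbX n k = mnlbX n l) : k = l := by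
  have hn : 1 ≤ n := by omega
  have ha := mnlb_aux n hn
  unfold mnlbX at h
  split_ifs at h <;> omega

lemma mnlbY_inj (n : ℕ) {k l : ℕ} (hk : k < 2*n) (hl : l < 2*n) (h : mnlbY n k = mnlbY n l) : k = l := by
  unfold mnlbY at h
  split_ifs at h <;> omega

lemma mnlb_no321 (n : ℕ) {a b c : ℕ} (ha : a < 2*n) (hb : b < 2*n) (hc : c < 2*n)
    (h1 : mnlbX n a < mnlbX n b) (h2 : mnlbX n b < mnlbX n c)
    (h3 : mnlbY n c < mnlbY n b) (h4 : mnlbY n b < mnlbY n a) : False := by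
  have hn : 1 ≤ n := by omega
  have haux := mnlb_aux n hn
  unfold mnlbX mnlbY at *
  split_ifs at * <;> omega


lemma mnlb_seg_fst {a b z : ℝ × ℝ} (h : z ∈ segment ℝ a b) : z.1 ∈ segment ℝ a.1 b.1 := by
  obtain ⟨t, u, ht, hu, htu, rfl⟩ := h
  exact ⟨t, u, ht, hu, htu, rfl⟩

lemma mnlb_seg_snd {a b z : ℝ × ℝ} (h : z ∈ segment ℝ a b) : z.2 ∈ segment ℝ a.2 b.2 := by
  obtain ⟨t, u, ht, hu, htu, rfl⟩ := h
  exact ⟨t, u, ht, hu, htu, rfl⟩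

lemma mnlb_horiz_mem {a b : ℝ × ℝ} (h : a.2 = b.2) {x : ℝ} (hx : x ∈ segment ℝ a.1 b.1) :
    ((x, a.2) : ℝ × ℝ) ∈ segment ℝ a b := by
  obtain ⟨t, u, ht, hu, htu, hx⟩ := hx
  refine ⟨t, u, ht, hu, htu, ?_⟩
  have : (t • a + u • b).2 = a.2 := by
    simp only [Prod.snd_add, Prod.smul_snd, smul_eq_mul, ← h]
    linear_combination a.2 * htu
  ext
  · simpa using hx
  · simpa using this

lemma mnlb_vert_mem {a b : ℝ × ℝ} (h : a.1 = b.1) {y : ℝ} (hy : y ∈ segment ℝ a.2 b.2) :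
    ((a.1, y) : ℝ × ℝ) ∈ segment ℝ a b := by
  obtain ⟨t, u, ht, hu, htu, hy⟩ := hy
  refine ⟨t, u, ht, hu, htu, ?_⟩
  have : (t • a + u • b).1 = a.1 := by
    simp only [Prod.fst_add, Prod.smul_fst, smul_eq_mul, ← h]
    linear_combination a.1 * htu
  ext
  · simpa using this
  · simpa using hy

lemma mnlb_divt {m : ℕ} (hm : 0 < m) (f : Fin (m + 1) → ℝ) (hf : Monotone f) (x : ℝ)
    (h1 : f 0 ≤ x) (h2 : x ≤ f (Fin.last m)) :
    ∃ i : Fin m, f i.castSucc ≤ x ∧ x ≤ f i.succ := by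
  classical
  set T : Finset (Fin (m + 1)) := Finset.univ.filter (fun j => f j ≤ x) with hT
  have hne : T.Nonempty := ⟨0, by simp [hT, h1]⟩
  obtain ⟨j0, hj0, hmax⟩ := T.exists_max_image id hne
  have hj0x : f j0 ≤ x := by simpa [hT] using hj0
  by_cases hj : (j0 : ℕ) < m
  · refine ⟨⟨j0, hj⟩, by simpa [Fin.castSucc] using hj0x, ?_⟩
    by_contra hlt
    push_neg at hlt
    have hmem : (⟨j0, hj⟩ : Fin m).succ ∈ T := by
      rw [hT]
      simp only [Finset.mem_filter, Finset.mem_univ, true_and]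
      exact le_of_lt hlt
    have hle := hmax _ hmem
    have : ((⟨j0, hj⟩ : Fin m).succ : ℕ) ≤ (j0 : ℕ) := hle
    simp only [Fin.val_succ] at this
    omega
  · have hj0last : j0 = Fin.last m := by
      apply Fin.ext; simp [Fin.last]; omega
    have hxe : x = f (Fin.last m) := le_antisymm h2 (by rw [← hj0last]; exact hj0x)
    refine ⟨⟨m - 1, by omega⟩, ?_, ?_⟩
    · calc f _ ≤ f (Fin.last m) := hf (Fin.le_last _)
        _ = x := hxe.symm
    · have : (⟨m - 1, by omega⟩ : Fin m).succ = Fin.last m := by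
        apply Fin.ext; simp [Fin.succ, Fin.last]; omega
      rw [this, ← hxe]

lemma mnlb_extract {U : Set (ℝ × ℝ)} {p q : ℝ × ℝ} (h : MonPathIn U p q)
    (hx : p.1 < q.1) (hy : p.2 < q.2) :
    (∀ x ∈ Set.Icc p.1 q.1, ∃ z ∈ U, z.1 = x ∧ z.2 ∈ Set.Icc p.2 q.2) ∧
    (∀ y ∈ Set.Icc p.2 q.2, ∃ z ∈ U, z.2 = y) := by
  obtain ⟨m, c, h0, hl, hseg, hmx, hmy⟩ := h
  have hm : 0 < m := by
    rcases Nat.eq_zero_or_pos m with hm0 | hm0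
    · exfalso; subst hm0
      have : c 0 = c (Fin.last 0) := by congr
      rw [h0, hl] at this
      rw [this] at hx; exact lt_irrefl _ hx
    · exact hm0
  have Mx : Monotone (fun i => (c i).1) := by
    rcases hmx with h' | h'
    · exact h'
    · exfalso
      have := h' (Fin.zero_le (Fin.last m))
      simp only [h0, hl] at this
      linarith
  have My : Monotone (fun i => (c i).2) := by
    rcases hmy with h' | h'
    · exact h'
    · exfalso
      have := h' (Fin.zero_le (Fin.last m))
      simp only [h0, hl] at this
      linarith
  have hy2 : ∀ j : Fin (m+1), (c j).2 ∈ Set.Icc p.2 q.2 := fun j =>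
    ⟨by rw [← h0]; exact My (Fin.zero_le j), by rw [← hl]; exact My (Fin.le_last j)⟩
  have hx2 : ∀ j : Fin (m+1), (c j).1 ∈ Set.Icc p.1 q.1 := fun j =>
    ⟨by rw [← h0]; exact Mx (Fin.zero_le j), by rw [← hl]; exact Mx (Fin.le_last j)⟩
  constructor
  · intro x hxm
    obtain ⟨i, hi1, hi2⟩ := mnlb_divt hm (fun j => (c j).1) Mx x (by show (c 0).1 ≤ x; rw [h0]; exact hxm.1)
      (by show x ≤ (c (Fin.last m)).1; rw [hl]; exact hxm.2)
    rcases (hseg i).1 with he | he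
    · have hxeq : (c i.castSucc).1 = x := le_antisymm hi1 (by rw [he]; exact hi2)
      exact ⟨c i.castSucc, (hseg i).2 (left_mem_segment ℝ _ _), hxeq, hy2 _⟩
    · have hxs : x ∈ segment ℝ (c i.castSucc).1 (c i.succ).1 := by
        rw [segment_eq_uIcc]
        exact Set.Icc_subset_uIcc ⟨hi1, hi2⟩
      refine ⟨(x, (c i.castSucc).2), (hseg i).2 (mnlb_horiz_mem he hxs), rfl, hy2 _⟩
  · intro y hym
    obtain ⟨i, hi1, hi2⟩ := mnlb_divt hm (fun j => (c j).2) My y (by show (c 0).2 ≤ y; rw [h0]; exact hym.1)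
      (by show y ≤ (c (Fin.last m)).2; rw [hl]; exact hym.2)
    rcases (hseg i).1 with he | he
    · have hys : y ∈ segment ℝ (c i.castSucc).2 (c i.succ).2 := by
        rw [segment_eq_uIcc]
        exact Set.Icc_subset_uIcc ⟨hi1, hi2⟩
      exact ⟨((c i.castSucc).1, y), (hseg i).2 (mnlb_vert_mem he hys), rfl⟩
    · have hyeq : (c i.castSucc).2 = y := le_antisymm hi1 (by rw [he]; exact hi2)
      exact ⟨c i.castSucc, (hseg i).2 (left_mem_segment ℝ _ _), hyeq⟩

/-- For each `n` there is a 321-avoiding set of `2n` points in `[0,1]²`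
in general position such that every Manhattan network for it (a finite collection of
axis-parallel segments whose union connects each pair of points by a monotone
rectilinear path) has total length at least `n`. -/
theorem manhattan_network_lower_bound (n : ℕ) :
    ∃ P : Fin (2 * n) → ℝ × ℝ,
      (∀ i, (P i).1 ∈ Set.Icc (0 : ℝ) 1 ∧ (P i).2 ∈ Set.Icc (0 : ℝ) 1) ∧
      (∀ i j, i ≠ j → (P i).1 ≠ (P j).1 ∧ (P i).2 ≠ (P j).2) ∧
      (¬ ∃ a b c : Fin (2 * n), (P a).1 < (P b).1 ∧ (P b).1 < (P c).1 ∧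
        (P c).2 < (P b).2 ∧ (P b).2 < (P a).2) ∧
      ∀ N : Finset ((ℝ × ℝ) × (ℝ × ℝ)),
        (∀ s ∈ N, s.1.1 = s.2.1 ∨ s.1.2 = s.2.2) →
        (∀ i j : Fin (2 * n), MonPathIn (⋃ s ∈ N, segment ℝ s.1 s.2) (P i) (P j)) →
        (n : ℝ) ≤ ∑ s ∈ N, dist s.1 s.2 := by
  classical
  rcases Nat.eq_zero_or_pos n with hn0 | hn
  · subst hn0
    refine ⟨fun _ => (0, 0), fun i => absurd i.2 (by omega), fun i => absurd i.2 (by omega),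
      ?_, ?_⟩
    · rintro ⟨a, -⟩; exact absurd a.2 (by omega)
    · intro N _ _
      simpa using Finset.sum_nonneg (fun s _ => dist_nonneg)
  have hnR : (0:ℝ) < n := by exact_mod_cast hn
  have hD : (0:ℝ) < 2*(n:ℝ)^2 := by positivity
  have hE : (0:ℝ) < 2*(n:ℝ) := by positivity
  refine ⟨fun k => mnlbP n k.val, ?_, ?_, ?_, ?_⟩
  · -- in the unit square
    intro i
    have hXb := mnlbX_le_bound n i.val i.2
    have hYb := mnlbY_le_bound n i.val i.2
    simp only [mnlbP, Set.mem_Icc]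
    refine ⟨⟨div_nonneg (by positivity) hD.le, ?_⟩, div_nonneg (by positivity) hE.le, ?_⟩
    · rw [div_le_one hD]
      have : ((mnlbX n i.val : ℕ) : ℝ) ≤ ((2*n*n : ℕ) : ℝ) := by exact_mod_cast hXb
      push_cast at this ⊢
      nlinarith
    · rw [div_le_one hE]
      have : ((mnlbY n i.val : ℕ) : ℝ) ≤ ((2*n : ℕ) : ℝ) := by exact_mod_cast hYb
      push_cast at this ⊢
      linarith
  · -- general position
    intro i j hij
    constructor
    · intro h
      apply hij
      have h' : ((mnlbX n i.val : ℕ) : ℝ) = mnlbX n j.val := by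
        simp only [mnlbP] at h
        rw [div_left_inj' hD.ne'] at h
        exact_mod_cast h
      exact Fin.ext (mnlbX_inj n i.2 j.2 (by exact_mod_cast h'))
    · intro h
      apply hij
      have h' : ((mnlbY n i.val : ℕ) : ℝ) = mnlbY n j.val := by
        simp only [mnlbP] at h
        rw [div_left_inj' hE.ne'] at h
        exact_mod_cast h
      exact Fin.ext (mnlbY_inj n i.2 j.2 (by exact_mod_cast h'))
  · -- 321-avoiding
    rintro ⟨a, b, c, h1, h2, h3, h4⟩
    simp only [mnlbP] at h1 h2 h3 h4
    rw [div_lt_div_iff_of_pos_right hD] at h1 h2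
    rw [div_lt_div_iff_of_pos_right hE] at h3 h4
    exact mnlb_no321 n a.2 b.2 c.2 (by exact_mod_cast h1) (by exact_mod_cast h2)
      (by exact_mod_cast h3) (by exact_mod_cast h4)
  · -- the network bound
    intro N hax hpath
    set U : Set (ℝ × ℝ) := ⋃ s ∈ N, segment ℝ s.1 s.2 with hU
    -- strips
    set ay : Fin n → ℝ := fun i => (2*(i:ℝ)) / (2*(n:ℝ)) with hay
    set by' : Fin n → ℝ := fun i => (2*(i:ℝ)+1) / (2*(n:ℝ)) with hby
    set px : Fin n → ℝ := fun i => ((i:ℝ)+1) / (2*(n:ℝ)^2) with hpx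
    set qx : Fin n → ℝ := fun i => (2*(n:ℝ)^2 - n + (i:ℝ) + 1) / (2*(n:ℝ)^2) with hqx
    have hpp : ∀ i : Fin n, mnlbP n i.val = (px i, ay i) := by
      intro i
      unfold mnlbP mnlbX mnlbY
      rw [if_pos i.2, if_pos i.2]
      simp only [hpx, hay]
      push_cast
      ring_nf
    have hpq : ∀ i : Fin n, mnlbP n (n + i.val) = (qx i, by' i) := by
      intro i
      unfold mnlbP mnlbX mnlbY
      rw [if_neg (by omega), if_neg (by omega)]
      simp only [hqx, hby]
      have h1 : n + i.val - n = i.val := by omega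
      rw [h1]
      have h2 : ((2*n*(n-1) : ℕ) : ℝ) = 2*(n:ℝ)*((n:ℝ)-1) := by
        push_cast [Nat.cast_sub hn]
        ring
      push_cast [h2]
      rw [Prod.mk.injEq]
      constructor
      · congr 1
        ring
      · rfl
    have hxlt : ∀ i : Fin n, px i < qx i := by
      intro i
      rw [hpx, hqx, div_lt_div_iff_of_pos_right hD]
      have hn1 : (1:ℝ) ≤ n := by exact_mod_cast hn
      nlinarith [hn1]
    have hylt : ∀ i : Fin n, ay i < by' i := by
      intro i
      rw [hay, hby, div_lt_div_iff_of_pos_right hE]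
      linarith
    -- disjointness of strips
    have hdisj : ∀ i j : Fin n, i ≠ j →
        Disjoint (Set.Icc (ay i) (by' i)) (Set.Icc (ay j) (by' j)) := by
      intro i j hij
      rw [Set.disjoint_left]
      intro y hyi hyj
      have h1 : 2*(i:ℝ) ≤ 2*(j:ℝ)+1 := by
        have := hyi.1.trans hyj.2
        rwa [hay, hby, div_le_div_iff_of_pos_right hE] at this
      have h2 : 2*(j:ℝ) ≤ 2*(i:ℝ)+1 := by
        have := hyj.1.trans hyi.2
        rwa [hay, hby, div_le_div_iff_of_pos_right hE] at this
      have h1' : 2*(i:ℕ) ≤ 2*(j:ℕ)+1 := by exact_mod_cast h1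
      have h2' : 2*(j:ℕ) ≤ 2*(i:ℕ)+1 := by exact_mod_cast h2
      exact hij (Fin.ext (by omega))
    -- extraction for each strip
    have hext : ∀ i : Fin n,
        (∀ x ∈ Set.Icc (px i) (qx i), ∃ z ∈ U, z.1 = x ∧ z.2 ∈ Set.Icc (ay i) (by' i)) ∧
        (∀ y ∈ Set.Icc (ay i) (by' i), ∃ z ∈ U, z.2 = y) := by
      intro i
      have hp := hpath ⟨i.val, by omega⟩ ⟨n + i.val, by omega⟩
      simp only [hpp i, hpq i] at hp
      have := mnlb_extract hp (by simpa using hxlt i) (by simpa using hylt i)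
      simpa using this
    -- the two families of measures
    set g1 : Fin n → (ℝ × ℝ) × (ℝ × ℝ) → ENNReal := fun i s =>
      MeasureTheory.volume (Set.uIcc s.1.2 s.2.2 ∩ Set.Icc (ay i) (by' i)) with hg1
    set g2 : Fin n → (ℝ × ℝ) × (ℝ × ℝ) → ENNReal := fun i s =>
      MeasureTheory.volume (if s.1.2 = s.2.2 ∧ s.1.2 ∈ Set.Icc (ay i) (by' i)
        then Set.uIcc s.1.1 s.2.1 else (∅ : Set ℝ)) with hg2
    have key1 : ∀ i : Fin n, (1:ENNReal) ≤ ∑ s ∈ N, (g1 i s + g2 i s) := by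
      intro i
      have covY : Set.Icc (ay i) (by' i) ⊆
          ⋃ s ∈ N, (Set.uIcc s.1.2 s.2.2 ∩ Set.Icc (ay i) (by' i)) := by
        intro y hy
        obtain ⟨z, hzU, hz2⟩ := (hext i).2 y hy
        rw [hU] at hzU
        simp only [Set.mem_iUnion] at hzU
        obtain ⟨s, hsN, hzs⟩ := hzU
        have : z.2 ∈ segment ℝ s.1.2 s.2.2 := by
          obtain ⟨t, u, ht, hu, htu, rfl⟩ := hzs
          exact ⟨t, u, ht, hu, htu, rfl⟩
        rw [segment_eq_uIcc] at this
        simp only [Set.mem_iUnion]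
        exact ⟨s, hsN, by rw [← hz2]; exact ⟨this, hz2 ▸ hy⟩⟩
      have covX : Set.Icc (px i) (qx i) ⊆
          (⋃ s ∈ N, {s.1.1}) ∪
          ⋃ s ∈ N, (if s.1.2 = s.2.2 ∧ s.1.2 ∈ Set.Icc (ay i) (by' i)
            then Set.uIcc s.1.1 s.2.1 else (∅ : Set ℝ)) := by
        intro x hx
        obtain ⟨z, hzU, hz1, hz2⟩ := (hext i).1 x hx
        rw [hU] at hzU
        simp only [Set.mem_iUnion] at hzU
        obtain ⟨s, hsN, hzs⟩ := hzU
        have hzx : z.1 ∈ segment ℝ s.1.1 s.2.1 := by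
          obtain ⟨t, u, ht, hu, htu, rfl⟩ := hzs
          exact ⟨t, u, ht, hu, htu, rfl⟩
        have hzy : z.2 ∈ segment ℝ s.1.2 s.2.2 := by
          obtain ⟨t, u, ht, hu, htu, rfl⟩ := hzs
          exact ⟨t, u, ht, hu, htu, rfl⟩
        by_cases hv : s.1.1 = s.2.1
        · left
          simp only [Set.mem_iUnion]
          refine ⟨s, hsN, ?_⟩
          rw [hv, segment_same] at hzx
          simp only [Set.mem_singleton_iff] at hzx ⊢
          rw [← hz1, hzx, hv]
        · right
          have hh : s.1.2 = s.2.2 := (hax s hsN).resolve_left hv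
          have hlev : s.1.2 ∈ Set.Icc (ay i) (by' i) := by
            rw [hh, segment_same, Set.mem_singleton_iff] at hzy
            rw [hh, ← hzy]
            exact hz2
          simp only [Set.mem_iUnion]
          refine ⟨s, hsN, ?_⟩
          rw [if_pos ⟨hh, hlev⟩, ← segment_eq_uIcc]
          rw [← hz1]
          exact hzx
      have hvolY : MeasureTheory.volume (Set.Icc (ay i) (by' i)) ≤ ∑ s ∈ N, g1 i s := by
        calc MeasureTheory.volume (Set.Icc (ay i) (by' i))
            ≤ MeasureTheory.volume (⋃ s ∈ N, (Set.uIcc s.1.2 s.2.2 ∩ Set.Icc (ay i) (by' i))) :=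
              MeasureTheory.measure_mono covY
          _ ≤ ∑ s ∈ N, g1 i s := MeasureTheory.measure_biUnion_finset_le N _
      have hvolX : MeasureTheory.volume (Set.Icc (px i) (qx i)) ≤ ∑ s ∈ N, g2 i s := by
        have hfin : (⋃ s ∈ (N : Set ((ℝ × ℝ) × (ℝ × ℝ))), {s.1.1}).Finite :=
          Set.Finite.biUnion N.finite_toSet (fun s _ => Set.finite_singleton _)
        calc MeasureTheory.volume (Set.Icc (px i) (qx i))
            ≤ MeasureTheory.volume ((⋃ s ∈ N, {s.1.1}) ∪
              ⋃ s ∈ N, (if s.1.2 = s.2.2 ∧ s.1.2 ∈ Set.Icc (ay i) (by' i)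
                then Set.uIcc s.1.1 s.2.1 else (∅ : Set ℝ))) :=
              MeasureTheory.measure_mono covX
          _ ≤ MeasureTheory.volume (⋃ s ∈ N, ({s.1.1} : Set ℝ)) +
              MeasureTheory.volume (⋃ s ∈ N, (if s.1.2 = s.2.2 ∧ s.1.2 ∈ Set.Icc (ay i) (by' i)
                then Set.uIcc s.1.1 s.2.1 else (∅ : Set ℝ))) :=
              MeasureTheory.measure_union_le _ _
          _ ≤ 0 + ∑ s ∈ N, g2 i s := by
              gcongr
              · exact le_of_eq (Set.Finite.measure_zero hfin _)
              · exact MeasureTheory.measure_biUnion_finset_le N _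
          _ = ∑ s ∈ N, g2 i s := by rw [zero_add]
      have hone : (1:ENNReal) = MeasureTheory.volume (Set.Icc (px i) (qx i)) +
          MeasureTheory.volume (Set.Icc (ay i) (by' i)) := by
        rw [Real.volume_Icc, Real.volume_Icc,
          ← ENNReal.ofReal_add (by linarith [hxlt i]) (by linarith [hylt i])]
        rw [show (1:ENNReal) = ENNReal.ofReal 1 by simp]
        congr 1
        rw [hpx, hqx, hay, hby]
        field_simp
        ring
      calc (1:ENNReal) = _ + _ := hone
        _ ≤ (∑ s ∈ N, g2 i s) + ∑ s ∈ N, g1 i s := add_le_add hvolX hvolY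
        _ = ∑ s ∈ N, (g1 i s + g2 i s) := by
            rw [← Finset.sum_add_distrib]
            exact Finset.sum_congr rfl (fun s _ => add_comm _ _)
    have key2 : ∀ s ∈ N, ∑ i : Fin n, (g1 i s + g2 i s) ≤ ENNReal.ofReal (dist s.1 s.2) := by
      intro s _
      rw [Finset.sum_add_distrib]
      by_cases hh : s.1.2 = s.2.2
      · have hg1z : ∀ i : Fin n, g1 i s = 0 := by
          intro i
          rw [hg1]
          simp only [hh, Set.uIcc_self]
          refine le_antisymm ?_ zero_le
          calc MeasureTheory.volume ({s.2.2} ∩ Set.Icc (ay i) (by' i))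
              ≤ MeasureTheory.volume ({s.2.2} : Set ℝ) :=
                MeasureTheory.measure_mono Set.inter_subset_left
            _ = 0 := Real.volume_singleton
        rw [Finset.sum_congr rfl (fun i _ => hg1z i), Finset.sum_const_zero, zero_add]
        have hdx : ENNReal.ofReal (dist s.1.1 s.2.1) ≤ ENNReal.ofReal (dist s.1 s.2) :=
          ENNReal.ofReal_le_ofReal (by rw [Prod.dist_eq]; exact le_max_left _ _)
        by_cases hex : ∃ i : Fin n, s.1.2 ∈ Set.Icc (ay i) (by' i)
        · obtain ⟨i0, hi0⟩ := hex
          have hsum : ∑ i : Fin n, g2 i s = g2 i0 s := by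
            apply Finset.sum_eq_single i0
            · intro j _ hji
              rw [hg2]
              simp only []
              rw [if_neg, MeasureTheory.measure_empty]
              rintro ⟨-, hj⟩
              exact (Set.disjoint_left.1 (hdisj j i0 hji) hj) hi0
            · intro h; exact absurd (Finset.mem_univ i0) h
          rw [hsum, hg2]
          simp only [if_pos (⟨hh, hi0⟩ : s.1.2 = s.2.2 ∧ s.1.2 ∈ Set.Icc (ay i0) (by' i0))]
          calc MeasureTheory.volume (Set.uIcc s.1.1 s.2.1)
              = ENNReal.ofReal |s.2.1 - s.1.1| := Real.volume_interval
            _ = ENNReal.ofReal (dist s.1.1 s.2.1) := by rw [Real.dist_eq, abs_sub_comm]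
            _ ≤ _ := hdx
        · have : ∀ i : Fin n, g2 i s = 0 := by
            intro i
            rw [hg2]
            simp only []
            rw [if_neg, MeasureTheory.measure_empty]
            rintro ⟨-, hi⟩
            exact hex ⟨i, hi⟩
          rw [Finset.sum_congr rfl (fun i _ => this i), Finset.sum_const_zero]
          exact zero_le
      · have hg2z : ∀ i : Fin n, g2 i s = 0 := by
          intro i
          rw [hg2]
          simp only []
          rw [if_neg, MeasureTheory.measure_empty]
          rintro ⟨h', -⟩
          exact hh h'
        rw [Finset.sum_congr rfl (fun i _ => hg2z i), Finset.sum_const_zero, add_zero]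
        have hdy : ENNReal.ofReal (dist s.1.2 s.2.2) ≤ ENNReal.ofReal (dist s.1 s.2) :=
          ENNReal.ofReal_le_ofReal (by rw [Prod.dist_eq]; exact le_max_right _ _)
        have hmeas : ∀ i : Fin n, MeasurableSet (Set.uIcc s.1.2 s.2.2 ∩ Set.Icc (ay i) (by' i)) :=
          fun i => measurableSet_uIcc.inter measurableSet_Icc
        have hpd : Set.PairwiseDisjoint (↑(Finset.univ : Finset (Fin n)))
            (fun i => Set.uIcc s.1.2 s.2.2 ∩ Set.Icc (ay i) (by' i)) :=
          fun i _ j _ hij =>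
            (hdisj i j hij).mono Set.inter_subset_right Set.inter_subset_right
        calc ∑ i : Fin n, g1 i s
            = MeasureTheory.volume (⋃ i ∈ Finset.univ,
                (Set.uIcc s.1.2 s.2.2 ∩ Set.Icc (ay i) (by' i))) :=
              (MeasureTheory.measure_biUnion_finset hpd (fun i _ => hmeas i)).symm
          _ ≤ MeasureTheory.volume (Set.uIcc s.1.2 s.2.2) := by
              apply MeasureTheory.measure_mono
              intro y hy
              simp only [Set.mem_iUnion] at hy
              obtain ⟨i, _, hyi, -⟩ := hy
              exact hyi
          _ = ENNReal.ofReal |s.2.2 - s.1.2| := Real.volume_interval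
          _ = ENNReal.ofReal (dist s.1.2 s.2.2) := by rw [Real.dist_eq, abs_sub_comm]
          _ ≤ _ := hdy
    have main : (n : ENNReal) ≤ ENNReal.ofReal (∑ s ∈ N, dist s.1 s.2) := by
      calc (n : ENNReal) = ∑ _i : Fin n, (1:ENNReal) := by simp
        _ ≤ ∑ i : Fin n, ∑ s ∈ N, (g1 i s + g2 i s) := Finset.sum_le_sum (fun i _ => key1 i)
        _ = ∑ s ∈ N, ∑ i : Fin n, (g1 i s + g2 i s) := Finset.sum_comm
        _ ≤ ∑ s ∈ N, ENNReal.ofReal (dist s.1 s.2) := Finset.sum_le_sum key2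
        _ = ENNReal.ofReal (∑ s ∈ N, dist s.1 s.2) :=
            (ENNReal.ofReal_sum_of_nonneg (fun s _ => dist_nonneg)).symm
    have hnn : (0:ℝ) ≤ ∑ s ∈ N, dist s.1 s.2 := Finset.sum_nonneg (fun s _ => dist_nonneg)
    rw [← ENNReal.ofReal_natCast n] at main
    exact (ENNReal.ofReal_le_ofReal_iff hnn).1 main
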